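/- Let G = (Φ, Σ, R, 𝒮) be a deterministic regular tree grammar and consider the recursive bottom-up parser that, on input x(y₁,…,y_k), recursively parses each child y_j to obtain a nonterminal B_j and rule sequence r̄_j, then looks up the (unique) rule r = A → x(B₁,…,B_k) ∈ R and returns (A, (r, r̄₁, …, r̄_k)), failing if no such rule exists. Then a tree x lies in L(G) if and only if the parser succeeds on x and returns a nonterminal S ∈ 𝒮; moreover, in that case the returned rule sequence generates x from S. -/

import Mathlib

structure Rule (N : Type) (α : Type) where
  lhs : N
  sym : α
  rhs : List N
deriving DecidableEq

inductive RTree (α : Type) where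
  | node : α → List (RTree α) → RTree α

def RTree.size {α : Type} : RTree α → Nat
  | .node _ ys => 1 + (ys.attach.map (fun y => RTree.size y.1)).sum
decreasing_by have := List.sizeOf_lt_of_mem y.2; simp only [RTree.node.sizeOf_spec]; omega

def RTree.children {α : Type} : RTree α → List (RTree α)
  | .node _ ys => ys

def RTree.root {α : Type} : RTree α → α
  | .node x _ => x

def RTree.dfs {α : Type} : RTree α → List (RTree α)
  | .node x ys => (ys.attach.map (fun y => RTree.dfs y.1)).flatten ++ [.node x ys]
decreasing_by have := List.sizeOf_lt_of_mem y.2; simp only [RTree.node.sizeOf_spec]; omega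

inductive GenList {N α : Type} (R : Set (Rule N α)) :
    List (Rule N α) → List N → List (RTree α) → Prop where
  | nil : GenList R [] [] []
  | step {r : Rule N α} {rs : List (Rule N α)} {stack : List N}
      {ys ts : List (RTree α)} :
      r ∈ R →
      ys.length = r.rhs.length →
      GenList R rs (r.rhs ++ stack) (ys ++ ts) →
      GenList R (r :: rs) (r.lhs :: stack) (RTree.node r.sym ys :: ts)

def GenSeq {N α : Type} (R : Set (Rule N α)) (rs : List (Rule N α))
    (A : N) (t : RTree α) : Prop :=
  GenList R rs [A] [t]

def Lang {N α : Type} (R : Set (Rule N α)) (A : N) : Set (RTree α) :=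
  {t | ∃ rs, GenSeq R rs A t}

def LangN {N α : Type} (R : Set (Rule N α)) (A : N) (n : Nat) : Set (RTree α) :=
  {t ∈ Lang R A | t.size ≤ n}

def Deterministic {N α : Type} (R : Set (Rule N α)) : Prop :=
  ∀ r ∈ R, ∀ r' ∈ R, r.sym = r'.sym → r.rhs = r'.rhs → r = r'

def parse {N α : Type} [DecidableEq N] [DecidableEq α] (R : List (Rule N α)) :
    RTree α → Option (N × List (Rule N α))
  | RTree.node x ys => do
    let res ← ys.attach.mapM (fun y => parse R y.1)
    match R.find? (fun r => r.sym == x && r.rhs == res.map Prod.fst) with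
    | some r => some (r.lhs, r :: (res.map Prod.snd).flatten)
    | none => none
decreasing_by have := List.sizeOf_lt_of_mem y.2; simp only [RTree.node.sizeOf_spec]; omega


theorem attach_mapM {α β} (l : List α) (f : α → Option β) :
    l.attach.mapM (fun y => f y.1) = l.mapM f := by
  conv_rhs => rw [← List.attach_map_subtype_val l]
  induction l.attach with
  | nil => rfl
  | cons a t ih => simp only [List.mapM_cons, List.map_cons, ih]

theorem mapM_some_iff {α β} (l : List α) (f : α → Option β) (res : List β) :
    l.mapM f = some res ↔ List.Forall₂ (fun t p => f t = some p) l res := by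
  induction l generalizing res with
  | nil =>
    constructor
    · intro h
      simp only [List.mapM_nil, pure, Option.some.injEq] at h
      subst h; constructor
    · rintro h; cases h; rfl
  | cons a t ih =>
    simp only [List.mapM_cons]
    constructor
    · intro h
      cases hfa : f a with
      | none => simp [hfa] at h
      | some b =>
        simp only [hfa, Option.bind_eq_bind, Option.bind_some] at h
        cases hft : t.mapM f with
        | none => rw [hft] at h; simp at h
        | some bs =>
          simp only [hft, Option.bind_some, pure, Option.some.injEq] at h
          subst h
          exact List.Forall₂.cons hfa ((ih _).mp hft)
    · intro h
      cases h with
      | cons hfa hrest =>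
        rw [show t.mapM f = some _ from (ih _).mpr hrest]
        simp [hfa]

theorem forall₂_imp_mem {α β} {P Q : α → β → Prop} :
    ∀ {ys : List α} {res : List β}, List.Forall₂ P ys res →
      (∀ y ∈ ys, ∀ p, P y p → Q y p) → List.Forall₂ Q ys res := by
  intro ys res h
  induction h with
  | nil => intro _; exact .nil
  | cons hy hrest ih =>
    intro himp
    exact .cons (himp _ List.mem_cons_self _ hy)
      (ih fun y hy' => himp y (List.mem_cons_of_mem _ hy'))

theorem GenList.length {N α : Type} {R : Set (Rule N α)} {rs : List (Rule N α)}
    {s : List N} {ts : List (RTree α)} (h : GenList R rs s ts) : s.length = ts.length := by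
  induction h with
  | nil => rfl
  | step hr hlen _ ih => simp_all

theorem GenList.nil_stack {N α : Type} {R : Set (Rule N α)} {rs : List (Rule N α)}
    {ts : List (RTree α)} (h : GenList R rs [] ts) : rs = [] ∧ ts = [] := by
  cases h; exact ⟨rfl, rfl⟩

theorem GenList.append {N α : Type} {R : Set (Rule N α)} {rs1 rs2 : List (Rule N α)}
    {s1 s2 : List N} {t1 t2 : List (RTree α)}
    (h1 : GenList R rs1 s1 t1) (h2 : GenList R rs2 s2 t2) :
    GenList R (rs1 ++ rs2) (s1 ++ s2) (t1 ++ t2) := by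
  induction h1 with
  | nil => simpa
  | step hr hlen h ih =>
    rw [List.cons_append, List.cons_append, List.cons_append]
    exact GenList.step hr hlen (by simpa using ih)

theorem GenList.split {N α : Type} {R : Set (Rule N α)} {rs : List (Rule N α)}
    {s : List N} {t : List (RTree α)} (h : GenList R rs s t) :
    ∀ {s1 s2 : List N} {t1 t2 : List (RTree α)}, s = s1 ++ s2 → t = t1 ++ t2 →
      s1.length = t1.length →
      ∃ rs1 rs2, rs = rs1 ++ rs2 ∧ GenList R rs1 s1 t1 ∧ GenList R rs2 s2 t2 := by
  induction h with
  | nil =>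
    intro s1 s2 t1 t2 hs ht _
    obtain ⟨rfl, rfl⟩ := List.append_eq_nil_iff.mp hs.symm
    obtain ⟨rfl, rfl⟩ := List.append_eq_nil_iff.mp ht.symm
    exact ⟨[], [], rfl, .nil, .nil⟩
  | @step r rs' stack ys ts hr hlen h ih =>
    intro s1 s2 t1 t2 hs ht hl
    cases s1 with
    | nil =>
      cases t1 with
      | nil => exact ⟨[], r :: rs', rfl, .nil, by subst hs ht; exact GenList.step hr hlen h⟩
      | cons => simp at hl
    | cons A s1' =>
      cases t1 with
      | nil => simp at hl
      | cons u t1' =>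
        simp only [List.cons_append, List.cons.injEq] at hs ht
        obtain ⟨rfl, rfl⟩ := hs
        obtain ⟨rfl, rfl⟩ := ht
        obtain ⟨a, b, rfl, ha, hb⟩ := ih (s1 := r.rhs ++ s1') (s2 := s2)
          (t1 := ys ++ t1') (t2 := t2)
          (by simp) (by simp) (by simp at hl ⊢; omega)
        exact ⟨r :: a, b, rfl, GenList.step hr hlen ha, hb⟩

theorem GenList.of_forall₂ {N α : Type} {R : Set (Rule N α)}
    {ys : List (RTree α)} {res : List (N × List (Rule N α))}
    (h : List.Forall₂ (fun y p => GenSeq R p.2 p.1 y) ys res) :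
    GenList R (res.map Prod.snd).flatten (res.map Prod.fst) ys := by
  induction h with
  | nil => exact .nil
  | @cons y p ys' res' hy _ ih =>
    simpa using GenList.append hy ih

theorem GenList.to_forall₂ {N α : Type} {R : Set (Rule N α)} :
    ∀ {Bs : List N} {rs : List (Rule N α)} {ys : List (RTree α)},
      GenList R rs Bs ys →
      ∃ res : List (N × List (Rule N α)), res.map Prod.fst = Bs ∧
        rs = (res.map Prod.snd).flatten ∧
        List.Forall₂ (fun y p => GenSeq R p.2 p.1 y) ys res := by
  intro Bs
  induction Bs with
  | nil =>
    intro rs ys h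
    obtain ⟨rfl, rfl⟩ := h.nil_stack
    exact ⟨[], rfl, rfl, .nil⟩
  | cons B Bs' ih =>
    intro rs ys h
    have hlen := h.length
    cases ys with
    | nil => simp at hlen
    | cons y ys' =>
      obtain ⟨rs1, rs2, rfl, h1, h2⟩ := h.split (s1 := [B]) (t1 := [y]) rfl rfl rfl
      obtain ⟨res, hfst, rfl, hfa⟩ := ih h2
      exact ⟨(B, rs1) :: res, by simp [hfst], by simp, .cons h1 hfa⟩

theorem parse_node {N α : Type} [DecidableEq N] [DecidableEq α] (R : List (Rule N α))
    (x : α) (ys : List (RTree α)) :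
    parse R (RTree.node x ys) = (ys.mapM (parse R)).bind (fun res =>
      match R.find? (fun r => r.sym == x && r.rhs == res.map Prod.fst) with
      | some r => some (r.lhs, r :: (res.map Prod.snd).flatten)
      | none => none) := by
  rw [parse, attach_mapM]
  rfl

theorem RTree.myrec {α : Type} {P : RTree α → Prop}
    (h : ∀ x ys, (∀ y ∈ ys, P y) → P (.node x ys)) : ∀ t, P t
  | .node x ys => h x ys (fun y _hy => RTree.myrec h y)
decreasing_by have := List.sizeOf_lt_of_mem _hy; simp only [RTree.node.sizeOf_spec]; omega

theorem parse_sound {N α : Type} [DecidableEq N] [DecidableEq α] (R : List (Rule N α)) :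
    ∀ t : RTree α, ∀ A rs, parse R t = some (A, rs) → GenSeq {r | r ∈ R} rs A t := by
  apply RTree.myrec
  intro x ys ih A rs hp
  rw [parse_node] at hp
  cases hm : ys.mapM (parse R) with
  | none => rw [hm] at hp; simp at hp
  | some res =>
    rw [hm] at hp
    simp only [Option.bind_some] at hp
    cases hf : R.find? (fun r => r.sym == x && r.rhs == res.map Prod.fst) with
    | none => rw [hf] at hp; simp at hp
    | some r =>
      rw [hf] at hp
      simp only [Option.some.injEq, Prod.mk.injEq] at hp
      obtain ⟨rfl, rfl⟩ := hp
      have hrR : r ∈ R := List.mem_of_find?_eq_some hf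
      have hrprop := List.find?_some hf
      simp only [Bool.and_eq_true, beq_iff_eq] at hrprop
      obtain ⟨hsym, hrhs⟩ := hrprop
      have hfa := (mapM_some_iff ys (parse R) res).mp hm
      have hgen : List.Forall₂ (fun y p => GenSeq {r | r ∈ R} p.2 p.1 y) ys res :=
        forall₂_imp_mem hfa (fun y hy p hyp => ih y hy p.1 p.2 (by rw [hyp]))
      have hgl := GenList.of_forall₂ hgen
      rw [← hrhs] at hgl
      have hstep := GenList.step (R := {r | r ∈ R}) hrR
        (ys := ys) (ts := []) (stack := [])
        (by rw [hrhs]; exact hfa.length_eq.trans (by simp))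
        (by simpa using hgl)
      unfold GenSeq
      rw [← hsym]
      exact hstep

theorem exists_mapM_parse {N α : Type} [DecidableEq N] [DecidableEq α] {R : List (Rule N α)} :
    ∀ {ys : List (RTree α)} {Bs : List N},
      List.Forall₂ (fun y B => ∃ rs', parse R y = some (B, rs')) ys Bs →
      ∃ res : List (N × List (Rule N α)), ys.mapM (parse R) = some res ∧
        res.map Prod.fst = Bs := by
  intro ys Bs h
  induction h with
  | nil => exact ⟨[], rfl, rfl⟩
  | @cons y B ys' Bs' hy _ ih =>
    obtain ⟨rs', hy⟩ := hy
    obtain ⟨res, hres, hfst⟩ := ih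
    exact ⟨(B, rs') :: res, by rw [List.mapM_cons, hy, hres]; rfl, by simp [hfst]⟩

theorem parse_complete {N α : Type} [DecidableEq N] [DecidableEq α] (R : List (Rule N α))
    (hdet : Deterministic {r | r ∈ R}) :
    ∀ t : RTree α, ∀ A rs, GenSeq {r | r ∈ R} rs A t →
      ∃ rs', parse R t = some (A, rs') := by
  apply RTree.myrec
  intro x ys ih A rs hg
  unfold GenSeq at hg
  cases hg with
  | @step r rs' stk ys0 ts hr hlen h =>
    have h' : GenList {r | r ∈ R} rs' r.rhs ys := by simpa using h
    obtain ⟨res0, hfst, rfl, hfa⟩ := h'.to_forall₂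
    have hfa2 : List.Forall₂ (fun y p => ∃ rs', parse R y = some (p.1, rs')) ys res0 :=
      forall₂_imp_mem hfa (fun y hy p hyp => ih y hy p.1 p.2 hyp)
    have hfa3 : List.Forall₂ (fun y B => ∃ rs', parse R y = some (B, rs'))
        ys (res0.map Prod.fst) := List.forall₂_map_right_iff.mpr hfa2
    obtain ⟨res, hm, hfst2⟩ := exists_mapM_parse hfa3
    rw [hfst] at hfst2
    rw [parse_node, hm]
    simp only [Option.bind_some]
    cases hf : R.find? (fun r' => r'.sym == r.sym && r'.rhs == res.map Prod.fst) with
    | none =>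
      exfalso
      have := List.find?_eq_none.mp hf r hr
      simp [hfst2] at this
    | some r2 =>
      have hr2R : r2 ∈ R := List.mem_of_find?_eq_some hf
      have hprop := List.find?_some hf
      simp only [Bool.and_eq_true, beq_iff_eq] at hprop
      obtain ⟨hsym2, hrhs2⟩ := hprop
      have : r = r2 := hdet r hr r2 hr2R hsym2.symm (by rw [hrhs2, hfst2])
      subst this
      exact ⟨_, rfl⟩

theorem stmt4 {N alpha : Type} [DecidableEq N] [DecidableEq alpha]
    (R : List (Rule N alpha)) (S : Set N)
    (hdet : Deterministic {r | r ∈ R}) (t : RTree alpha) :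
    (t ∈ ⋃ s ∈ S, Lang {r | r ∈ R} s ↔
      ∃ (A : N) (rs : List (Rule N alpha)), parse R t = some (A, rs) ∧ A ∈ S) ∧
    (∀ (A : N) (rs : List (Rule N alpha)), parse R t = some (A, rs) → A ∈ S →
      GenSeq {r | r ∈ R} rs A t) := by
  constructor
  · constructor
    · intro h
      rw [Set.mem_iUnion₂] at h
      obtain ⟨s, hs, rs, hgen⟩ := h
      obtain ⟨rs', hp⟩ := parse_complete R hdet t s rs hgen
      exact ⟨s, rs', hp, hs⟩
    · rintro ⟨A, rs, hp, hA⟩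
      rw [Set.mem_iUnion₂]
      exact ⟨A, hA, rs, parse_sound R t A rs hp⟩
  · intro A rs hp _
    exact parse_sound R t A rs hp
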